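/- Let 𝔐 be a translation-invariant open quantum random walk on an infinite countable abelian group V with identical internal spaces 𝔥_i = 𝔥 and transition operators L_{i,j} = L_{j−i}. If 𝔐 is irreducible, then 𝔐 has no invariant state. -/

import Mathlib

open Matrix
open scoped ComplexOrder
set_option linter.unusedSectionVars false
set_option maxHeartbeats 1600000
namespace OQRWAux
variable {n : Type*} [Fintype n] [DecidableEq n] {A : Matrix n n ℂ}




open scoped MatrixOrder in
lemma psd_exists_eq_conjTranspose_mul_self {A : Matrix n n ℂ} (hA : A.PosSemidef) :
    ∃ B : Matrix n n ℂ, A = Bᴴ * B := by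
  obtain ⟨B, hB⟩ := CStarAlgebra.nonneg_iff_eq_star_mul_self.mp hA.nonneg
  exact ⟨B, hB⟩

/-- Trace of a PSD matrix is nonnegative (in the complex order). -/
lemma trace_psd_nonneg {A : Matrix n n ℂ} (hA : A.PosSemidef) : 0 ≤ A.trace := by
  obtain ⟨B, rfl⟩ := psd_exists_eq_conjTranspose_mul_self hA
  have : (Bᴴ * B).trace = ∑ j, ∑ i, star (B i j) * B i j := by
    simp [Matrix.trace, Matrix.diag, Matrix.mul_apply, Matrix.conjTranspose_apply]
  rw [this]
  exact Finset.sum_nonneg fun j _ => Finset.sum_nonneg fun i _ => star_mul_self_nonneg _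

/-- PSD matrix with zero trace is zero. -/
lemma psd_trace_eq_zero {A : Matrix n n ℂ} (hA : A.PosSemidef) (h : A.trace = 0) : A = 0 := by
  obtain ⟨B, rfl⟩ := psd_exists_eq_conjTranspose_mul_self hA
  have ht : (Bᴴ * B).trace = ∑ j, ∑ i, star (B i j) * B i j := by
    simp [Matrix.trace, Matrix.diag, Matrix.mul_apply, Matrix.conjTranspose_apply]
  rw [ht] at h
  have hB : B = 0 := by
    ext i j
    have h1 : ∀ j ∈ Finset.univ, (0:ℂ) ≤ ∑ i, star (B i j) * B i j :=
      fun j _ => Finset.sum_nonneg fun i _ => star_mul_self_nonneg _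
    have h2 := (Finset.sum_eq_zero_iff_of_nonneg h1).mp h j (Finset.mem_univ j)
    have h3 := (Finset.sum_eq_zero_iff_of_nonneg
      (fun i _ => star_mul_self_nonneg (B i j))).mp h2 i (Finset.mem_univ i)
    rcases mul_eq_zero.mp h3 with h4 | h4
    · simpa [star_eq_zero] using h4
    · simpa using h4
  simp [hB]

/-- trace of product of PSD matrices is nonneg. -/
lemma trace_mul_psd_nonneg {A B : Matrix n n ℂ} (hA : A.PosSemidef) (hB : B.PosSemidef) :
    0 ≤ (A * B).trace := by
  obtain ⟨C, rfl⟩ := psd_exists_eq_conjTranspose_mul_self hA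
  have : (Cᴴ * C * B).trace = (C * B * Cᴴ).trace := by
    rw [Matrix.mul_assoc, Matrix.trace_mul_comm, Matrix.mul_assoc]
  rw [this]
  exact trace_psd_nonneg (hB.mul_mul_conjTranspose_same C)

/-- PSD summands with zero sum are zero. -/
lemma psd_sum_eq_zero {ι : Type*} {s : Finset ι} {f : ι → Matrix n n ℂ}
    (hf : ∀ i ∈ s, (f i).PosSemidef) (h : ∑ i ∈ s, f i = 0) : ∀ i ∈ s, f i = 0 := by
  intro i hi
  refine psd_trace_eq_zero (hf i hi) ?_
  have htr : ∑ j ∈ s, (f j).trace = 0 := by rw [← Matrix.trace_sum, h, Matrix.trace_zero]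
  exact (Finset.sum_eq_zero_iff_of_nonneg fun j hj => trace_psd_nonneg (hf j hj)).mp htr i hi

lemma mul_psd_mul_conjTranspose_eq_zero {A B : Matrix n n ℂ} (hA : A.PosSemidef)
    (h : B * A * Bᴴ = 0) : B * A = 0 := by
  obtain ⟨C, rfl⟩ := psd_exists_eq_conjTranspose_mul_self hA
  have hs : B * (Cᴴ * C) * Bᴴ = (B * Cᴴ) * (B * Cᴴ)ᴴ := by
    rw [Matrix.conjTranspose_mul, Matrix.conjTranspose_conjTranspose]
    simp only [Matrix.mul_assoc]
  have h0 : B * Cᴴ = 0 := Matrix.self_mul_conjTranspose_eq_zero.mp (hs ▸ h)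
  rw [← Matrix.mul_assoc, h0, Matrix.zero_mul]




/-- Functional calculus of a Hermitian matrix via its spectral decomposition. -/
noncomputable def conjD (hA : A.IsHermitian) (f : ℝ → ℝ) : Matrix n n ℂ :=
  (hA.eigenvectorUnitary : Matrix n n ℂ) *
    diagonal (RCLike.ofReal ∘ (fun i => f (hA.eigenvalues i))) *
    star (hA.eigenvectorUnitary : Matrix n n ℂ)

lemma conjD_id (hA : A.IsHermitian) : conjD hA (fun x => x) = A := by
  rw [conjD]; exact (hA.spectral_theorem).symm

lemma conjD_mul (hA : A.IsHermitian) (f g : ℝ → ℝ) :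
    conjD hA f * conjD hA g = conjD hA (fun x => f x * g x) := by
  unfold conjD
  have hU : star (hA.eigenvectorUnitary : Matrix n n ℂ) * (hA.eigenvectorUnitary : Matrix n n ℂ)
      = 1 := (Matrix.mem_unitaryGroup_iff').mp hA.eigenvectorUnitary.2
  have hcancel : ∀ X : Matrix n n ℂ, star (hA.eigenvectorUnitary : Matrix n n ℂ) *
      ((hA.eigenvectorUnitary : Matrix n n ℂ) * X) = X := by
    intro X; rw [← Matrix.mul_assoc, hU, Matrix.one_mul]
  simp only [Matrix.mul_assoc]
  rw [hcancel, ← Matrix.mul_assoc (diagonal _), Matrix.diagonal_mul_diagonal]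
  have : (fun i => (RCLike.ofReal (f (hA.eigenvalues i)) : ℂ) * RCLike.ofReal (g (hA.eigenvalues i)))
      = (RCLike.ofReal ∘ fun i => f (hA.eigenvalues i) * g (hA.eigenvalues i) : n → ℂ) := by
    funext i; simp [Function.comp]
  simp only [Function.comp_apply]
  rw [this]

lemma conjD_sub (hA : A.IsHermitian) (f g : ℝ → ℝ) :
    conjD hA f - conjD hA g = conjD hA (fun x => f x - g x) := by
  unfold conjD
  rw [← Matrix.sub_mul, ← Matrix.mul_sub, Matrix.diagonal_sub]
  have : (fun i => (RCLike.ofReal (f (hA.eigenvalues i)) : ℂ) - RCLike.ofReal (g (hA.eigenvalues i)))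
      = (RCLike.ofReal ∘ fun i => f (hA.eigenvalues i) - g (hA.eigenvalues i) : n → ℂ) := by
    funext i; simp [Function.comp]
  simp only [Function.comp_apply]
  rw [this]

lemma conjD_one (hA : A.IsHermitian) : conjD hA (fun _ => 1) = 1 := by
  unfold conjD
  have : (RCLike.ofReal ∘ fun (_ : n) => (1:ℝ)) = (fun _ => (1:ℂ)) := by funext i; simp
  rw [this, Matrix.diagonal_one, Matrix.mul_one]
  exact (Matrix.mem_unitaryGroup_iff).mp hA.eigenvectorUnitary.2

lemma conjD_psd (hA : A.IsHermitian) (f : ℝ → ℝ) (hf : ∀ x, 0 ≤ f x) :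
    (conjD hA f).PosSemidef := by
  unfold conjD
  rw [Matrix.star_eq_conjTranspose]
  refine (Matrix.posSemidef_diagonal_iff.mpr ?_).mul_mul_conjTranspose_same _
  intro i
  simpa using hf (hA.eigenvalues i)

lemma conjD_herm (hA : A.IsHermitian) (f : ℝ → ℝ) : (conjD hA f).IsHermitian := by
  unfold conjD Matrix.IsHermitian
  have hd : star (RCLike.ofReal ∘ fun i => f (hA.eigenvalues i) : n → ℂ)
      = (RCLike.ofReal ∘ fun i => f (hA.eigenvalues i) : n → ℂ) := by
    funext i; simp [Function.comp, RCLike.star_def, RCLike.conj_ofReal]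
  rw [Matrix.star_eq_conjTranspose]
  simp only [Matrix.conjTranspose_mul, Matrix.conjTranspose_conjTranspose,
    Matrix.diagonal_conjTranspose, hd, Matrix.star_eq_conjTranspose, Matrix.mul_assoc]

lemma conjD_congr (hA : A.IsHermitian) {f g : ℝ → ℝ} (h : ∀ x, f x = g x) :
    conjD hA f = conjD hA g := by
  have : f = g := funext h
  rw [this]

lemma conjD_zero (hA : A.IsHermitian) : conjD hA (fun _ => 0) = 0 := by
  unfold conjD
  have : (RCLike.ofReal ∘ fun (_ : n) => (0:ℝ)) = (fun _ => (0:ℂ)) := by funext i; simp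
  rw [this, Matrix.diagonal_zero, Matrix.mul_zero, Matrix.zero_mul]

lemma trace_re_nonneg {A : Matrix n n ℂ} (hA : A.PosSemidef) : 0 ≤ A.trace.re :=
  (Complex.le_def.mp (trace_psd_nonneg hA)).1

lemma trace_im_zero {A : Matrix n n ℂ} (hA : A.PosSemidef) : A.trace.im = 0 :=
  ((Complex.le_def.mp (trace_psd_nonneg hA)).2).symm

lemma psd_trace_re_eq_zero {A : Matrix n n ℂ} (hA : A.PosSemidef) (h : A.trace.re = 0) :
    A = 0 :=
  psd_trace_eq_zero hA (Complex.ext h (trace_im_zero hA))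

lemma trace_mul_psd_re_nonneg {A B : Matrix n n ℂ} (hA : A.PosSemidef) (hB : B.PosSemidef) :
    0 ≤ ((A * B).trace).re :=
  (Complex.le_def.mp (trace_mul_psd_nonneg hA hB)).1

lemma exists_mulVec_ne_zero {A : Matrix n n ℂ} (h : A ≠ 0) : ∃ u, A *ᵥ u ≠ 0 := by
  by_contra hc
  push_neg at hc
  apply h
  ext i j
  have := congrFun (hc (Pi.single j 1)) i
  simpa [Matrix.mulVec_single] using this

lemma psd_finsetSum {ι : Type*} {s : Finset ι} {f : ι → Matrix n n ℂ}
    (hf : ∀ i ∈ s, (f i).PosSemidef) : (∑ i ∈ s, f i).PosSemidef := by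
  classical
  induction s using Finset.induction_on with
  | empty => simpa using Matrix.PosSemidef.zero
  | insert x s hx ih =>
    rw [Finset.sum_insert hx]
    exact (hf _ (Finset.mem_insert_self _ _)).add
      (ih fun i hi => hf i (Finset.mem_insert_of_mem hi))

theorem key {V : Type*} [AddCommGroup V] [DecidableEq V] {k : ℕ}
    (S : Finset V) (L : V → Matrix (Fin k) (Fin k) ℂ)
    (hstoch : ∑ s ∈ S, (L s)ᴴ * L s = 1)
    (hirr : ∀ v : V, ∀ x y : Fin k → ℂ, x ≠ 0 → y ≠ 0 →
      ∃ l : List V, l ≠ [] ∧ (∀ s ∈ l, s ∈ S) ∧ l.sum = v ∧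
        star y ⬝ᵥ ((l.map L).prod).mulVec x ≠ 0)
    (ρ σ : V → Matrix (Fin k) (Fin k) ℂ)
    (hρ : ∀ i, (ρ i).PosSemidef) (hσ : ∀ i, (σ i).PosSemidef)
    (hρs : Summable (fun i => ((ρ i).trace).re)) (hσs : Summable (fun i => ((σ i).trace).re))
    (htr : (∑' i, ((ρ i).trace).re) = ∑' i, ((σ i).trace).re)
    (hinvρ : ∀ i, (∑ s ∈ S, L s * ρ (i + s) * (L s)ᴴ) = ρ i)
    (hinvσ : ∀ i, (∑ s ∈ S, L s * σ (i + s) * (L s)ᴴ) = σ i) :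
    ∀ i, ρ i = σ i := by
  classical
  have hη : ∀ i, (ρ i - σ i).IsHermitian := fun i => ((hρ i).1).sub ((hσ i).1)
  set ep : V → Matrix (Fin k) (Fin k) ℂ :=
    fun i => conjD (hη i) (fun x => max x 0) with hep_def
  set em : V → Matrix (Fin k) (Fin k) ℂ :=
    fun i => conjD (hη i) (fun x => max (-x) 0) with hem_def
  set P : V → Matrix (Fin k) (Fin k) ℂ :=
    fun i => conjD (hη i) (fun x => if 0 < x then 1 else 0) with hP_def
  set G : V → Matrix (Fin k) (Fin k) ℂ :=
    fun i => conjD (hη i) (fun x => if 0 < x then x⁻¹ else 0) with hG_def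
  have hepeq : ∀ i, ep i = conjD (hη i) (fun x => max x 0) := fun i => by rw [hep_def]
  have hemeq : ∀ i, em i = conjD (hη i) (fun x => max (-x) 0) := fun i => by rw [hem_def]
  have hPeq : ∀ i, P i = conjD (hη i) (fun x => if 0 < x then 1 else 0) := fun i => by
    rw [hP_def]
  have hGeq : ∀ i, G i = conjD (hη i) (fun x => if 0 < x then x⁻¹ else 0) := fun i => by
    rw [hG_def]
  have hepPSD : ∀ i, (ep i).PosSemidef := fun i => by
    rw [hepeq]; exact conjD_psd _ _ (fun x => le_max_right _ _)
  have hemPSD : ∀ i, (em i).PosSemidef := fun i => by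
    rw [hemeq]; exact conjD_psd _ _ (fun x => le_max_right _ _)
  have hPPSD : ∀ i, (P i).PosSemidef := fun i => by
    rw [hPeq]; exact conjD_psd _ _ (fun x => by split <;> norm_num)
  have hPherm : ∀ i, (P i).IsHermitian := fun i => by rw [hPeq]; exact conjD_herm _ _
  have h1P : ∀ i, ((1 : Matrix (Fin k) (Fin k) ℂ) - P i)
      = conjD (hη i) (fun x => 1 - (if 0 < x then 1 else 0)) := fun i => by
    rw [hPeq, ← conjD_one (hη i)]; exact conjD_sub _ _ _
  have h1PPSD : ∀ i, ((1 : Matrix (Fin k) (Fin k) ℂ) - P i).PosSemidef := fun i => by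
    rw [h1P i]; exact conjD_psd _ _ (fun x => by split <;> norm_num)
  have h1Pherm : ∀ i, ((1 : Matrix (Fin k) (Fin k) ℂ) - P i).IsHermitian := fun i => by
    rw [h1P i]; exact conjD_herm _ _
  have hsub : ∀ i, ep i - em i = ρ i - σ i := by
    intro i
    rw [hepeq, hemeq, conjD_sub]
    calc conjD (hη i) (fun x => max x 0 - max (-x) 0)
        = conjD (hη i) (fun x => x) := by
          refine conjD_congr _ (fun x => ?_)
          rcases le_total x 0 with h | h
          · rw [max_eq_right h, max_eq_left (neg_nonneg.mpr h)]; ring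
          · rw [max_eq_left h, max_eq_right (neg_nonpos.mpr h)]; ring
      _ = ρ i - σ i := conjD_id _
  have hPep : ∀ i, P i * ep i = ep i := by
    intro i
    rw [hPeq, hepeq, conjD_mul]
    refine conjD_congr _ (fun x => ?_)
    rcases lt_or_ge 0 x with h | h
    · rw [if_pos h, one_mul]
    · rw [if_neg (not_lt.mpr h), zero_mul, max_eq_right h]
  have hPem : ∀ i, P i * em i = 0 := by
    intro i
    rw [hPeq, hemeq, conjD_mul]
    have : conjD (hη i) (fun x => (if 0 < x then 1 else 0) * max (-x) 0)
        = conjD (hη i) (fun _ => 0) := by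
      refine conjD_congr _ (fun x => ?_)
      rcases lt_or_ge 0 x with h | h
      · rw [if_pos h, one_mul, max_eq_right (neg_nonpos.mpr h.le)]
      · rw [if_neg (not_lt.mpr h), zero_mul]
    rw [this, conjD_zero]
  have hPP : ∀ i, P i * P i = P i := by
    intro i
    rw [hPeq, conjD_mul]
    refine conjD_congr _ (fun x => ?_)
    rcases lt_or_ge 0 x with h | h
    · rw [if_pos h, one_mul]
    · rw [if_neg (not_lt.mpr h), zero_mul]
  have hepG : ∀ i, ep i * G i = P i := by
    intro i
    rw [hepeq, hGeq, hPeq, conjD_mul]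
    refine conjD_congr _ (fun x => ?_)
    rcases lt_or_ge 0 x with h | h
    · rw [if_pos h, if_pos h, max_eq_left h.le, mul_inv_cancel₀ (ne_of_gt h)]
    · rw [if_neg (not_lt.mpr h), if_neg (not_lt.mpr h), mul_zero]
  have hPηP : ∀ i, P i * (ρ i - σ i) * P i = ep i := by
    intro i
    conv_lhs => rw [← conjD_id (hη i)]
    rw [hPeq, hepeq, conjD_mul, conjD_mul]
    refine conjD_congr _ (fun x => ?_)
    rcases lt_or_ge 0 x with h | h
    · rw [if_pos h, one_mul, mul_one, max_eq_left h.le]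
    · rw [if_neg (not_lt.mpr h), zero_mul, zero_mul, max_eq_right h]
  -- trace facts
  have hta0 : ∀ i, 0 ≤ ((ep i).trace).re := fun i => trace_re_nonneg (hepPSD i)
  have htrace_epP : ∀ i, (ep i).trace = ((ρ i - σ i) * P i).trace := by
    intro i
    rw [← hPηP i, Matrix.trace_mul_cycle, hPP i, Matrix.trace_mul_comm]
  have hbound : ∀ i, ((ep i).trace).re ≤ ((ρ i).trace).re + ((σ i).trace).re := by
    intro i
    have e1 : 0 ≤ (((σ i + σ i) * P i).trace).re :=
      trace_mul_psd_re_nonneg ((hσ i).add (hσ i)) (hPPSD i)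
    have e2 : (ρ i + σ i) - (ρ i - σ i) = σ i + σ i := by abel
    have e3 : (((ρ i - σ i)) * P i).trace.re ≤ ((ρ i + σ i) * P i).trace.re := by
      have e5 : ((ρ i + σ i) * P i).trace.re - ((ρ i - σ i) * P i).trace.re
          = ((σ i + σ i) * P i).trace.re := by
        rw [← Complex.sub_re, ← Matrix.trace_sub, ← Matrix.sub_mul, e2]
      linarith
    have e4 : ((ρ i + σ i) * P i).trace.re ≤ ((ρ i + σ i)).trace.re := by
      have h5 : 0 ≤ (((ρ i + σ i) * (1 - P i)).trace).re :=
        trace_mul_psd_re_nonneg ((hρ i).add (hσ i)) (h1PPSD i)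
      have e6 : ((ρ i + σ i)).trace.re - ((ρ i + σ i) * P i).trace.re
          = (((ρ i + σ i) * (1 - P i)).trace).re := by
        rw [Matrix.mul_sub, Matrix.mul_one, Matrix.trace_sub, Complex.sub_re]
      linarith
    have e7 : ((ρ i + σ i)).trace.re = ((ρ i).trace).re + ((σ i).trace).re := by
      rw [Matrix.trace_add, Complex.add_re]
    have e8 := htrace_epP i
    calc ((ep i).trace).re = ((ρ i - σ i) * P i).trace.re := by rw [e8]
      _ ≤ ((ρ i + σ i) * P i).trace.re := e3
      _ ≤ ((ρ i + σ i)).trace.re := e4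
      _ = ((ρ i).trace).re + ((σ i).trace).re := e7
  have htaS : Summable (fun i => ((ep i).trace).re) :=
    Summable.of_nonneg_of_le hta0 hbound (hρs.add hσs)
  -- the image of the positive part under the map
  set M : V → Matrix (Fin k) (Fin k) ℂ :=
    fun i => ∑ s ∈ S, L s * ep (i + s) * (L s)ᴴ with hM_def
  have hM : ∀ i, M i = ∑ s ∈ S, L s * ep (i + s) * (L s)ᴴ := fun i => by rw [hM_def]
  have hMPSD : ∀ i, (M i).PosSemidef := fun i => by
    rw [hM]; exact psd_finsetSum (fun s _ => (hepPSD _).mul_mul_conjTranspose_same (L s))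
  have hMsubη : ∀ i, M i - (ρ i - σ i) = ∑ s ∈ S, L s * em (i + s) * (L s)ᴴ := by
    intro i
    have hterm : ∀ s ∈ S, L s * ep (i+s) * (L s)ᴴ - L s * em (i+s) * (L s)ᴴ
        = L s * ρ (i+s) * (L s)ᴴ - L s * σ (i+s) * (L s)ᴴ := by
      intro s _
      rw [← Matrix.sub_mul, ← Matrix.sub_mul, ← Matrix.mul_sub, ← Matrix.mul_sub, hsub]
    have h1 : M i - ∑ s ∈ S, L s * em (i+s) * (L s)ᴴ = ρ i - σ i := by
      rw [hM, ← Finset.sum_sub_distrib, Finset.sum_congr rfl hterm, Finset.sum_sub_distrib,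
        hinvρ i, hinvσ i]
    rw [← h1]; abel
  have hMηPSD : ∀ i, (M i - (ρ i - σ i)).PosSemidef := fun i => by
    rw [hMsubη i]
    exact psd_finsetSum (fun s _ => (hemPSD _).mul_mul_conjTranspose_same (L s))
  -- pointwise trace inequalities
  have hab : ∀ i, ((ep i).trace).re ≤ ((P i * M i * P i).trace).re := by
    intro i
    have h1 : (P i * (M i - (ρ i - σ i)) * (P i)ᴴ).PosSemidef :=
      (hMηPSD i).mul_mul_conjTranspose_same _
    rw [(hPherm i).eq] at h1
    have h2 : P i * (M i - (ρ i - σ i)) * P i = P i * M i * P i - ep i := by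
      rw [Matrix.mul_sub, Matrix.sub_mul, hPηP i]
    rw [h2] at h1
    have h3 := trace_re_nonneg h1
    rw [Matrix.trace_sub, Complex.sub_re] at h3
    linarith
  have hPMP_PM : ∀ i, (P i * M i * P i).trace = (P i * M i).trace := by
    intro i
    rw [Matrix.trace_mul_cycle (P i) (M i) (P i), hPP i]
  have hPMPtr : ∀ i, (M i).trace.re - ((P i * M i * P i).trace).re
      = (((1 - P i) * M i * (1 - P i)).trace).re := by
    intro i
    have hexp : (1 - P i) * M i * (1 - P i)
        = M i - P i * M i - M i * P i + P i * M i * P i := by noncomm_ring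
    have hMP_PM : (M i * P i).trace = (P i * M i).trace := Matrix.trace_mul_comm _ _
    have h4 : ((M i - P i * M i - M i * P i + P i * M i * P i)).trace
        = (M i).trace - (P i * M i * P i).trace := by
      rw [Matrix.trace_add, Matrix.trace_sub, Matrix.trace_sub, hPMP_PM i, hMP_PM]
      ring
    rw [hexp, h4, Complex.sub_re]
  have hbc : ∀ i, ((P i * M i * P i).trace).re ≤ (M i).trace.re := by
    intro i
    have hpsd : ((1 - P i) * M i * (1 - P i)).PosSemidef := by
      have := (hMPSD i).mul_mul_conjTranspose_same (1 - P i)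
      rwa [(h1Pherm i).eq] at this
    have := trace_re_nonneg hpsd
    linarith [hPMPtr i]
  -- trace preservation of the map, summed over the group
  have hgnn : ∀ (s : V) (j : V), 0 ≤ ((((L s)ᴴ * L s) * ep j).trace).re := fun s j =>
    trace_mul_psd_re_nonneg (Matrix.posSemidef_conjTranspose_mul_self _) (hepPSD j)
  have h1mLL : ∀ s ∈ S, ((1 : Matrix (Fin k) (Fin k) ℂ) - (L s)ᴴ * L s).PosSemidef := by
    intro s hs
    have h5 : (1 : Matrix (Fin k) (Fin k) ℂ) - (L s)ᴴ * L s
        = ∑ t ∈ S.erase s, (L t)ᴴ * L t := by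
      rw [← hstoch, ← Finset.add_sum_erase S _ hs]
      abel
    rw [h5]
    exact psd_finsetSum (fun t _ => Matrix.posSemidef_conjTranspose_mul_self _)
  have hgle : ∀ s ∈ S, ∀ j, ((((L s)ᴴ * L s) * ep j).trace).re ≤ ((ep j).trace).re := by
    intro s hs j
    have h0 : 0 ≤ (((1 - (L s)ᴴ * L s) * ep j).trace).re :=
      trace_mul_psd_re_nonneg (h1mLL s hs) (hepPSD j)
    have h6 : ((ep j).trace).re - ((((L s)ᴴ * L s) * ep j).trace).re
        = (((1 - (L s)ᴴ * L s) * ep j).trace).re := by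
      rw [Matrix.sub_mul, Matrix.one_mul, Matrix.trace_sub, Complex.sub_re]
    linarith
  have hgS : ∀ s ∈ S, Summable (fun j => ((((L s)ᴴ * L s) * ep j).trace).re) := fun s hs =>
    Summable.of_nonneg_of_le (hgnn s) (hgle s hs) htaS
  have hgShift : ∀ s ∈ S, Summable (fun i => ((((L s)ᴴ * L s) * ep (i + s)).trace).re) := by
    intro s hs
    have h := ((Equiv.addRight s).summable_iff).mpr (hgS s hs)
    exact h.congr (fun i => by simp [Equiv.coe_addRight, Function.comp])
  have btrace : ∀ i, (M i).trace.re = ∑ s ∈ S, ((((L s)ᴴ * L s) * ep (i + s)).trace).re := by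
    intro i
    rw [hM, Matrix.trace_sum, Complex.re_sum]
    exact Finset.sum_congr rfl (fun s _ => by rw [Matrix.trace_mul_cycle])
  have hbS : Summable (fun i => (M i).trace.re) :=
    Summable.congr (summable_sum (fun s hs => hgShift s hs)) (fun i => (btrace i).symm)
  have htsum : ∑' i, (M i).trace.re = ∑' i, ((ep i).trace).re := by
    calc ∑' i, (M i).trace.re
        = ∑' i, ∑ s ∈ S, ((((L s)ᴴ * L s) * ep (i + s)).trace).re := tsum_congr btrace
      _ = ∑ s ∈ S, ∑' i, ((((L s)ᴴ * L s) * ep (i + s)).trace).re :=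
          Summable.tsum_finsetSum (fun s hs => hgShift s hs)
      _ = ∑ s ∈ S, ∑' j, ((((L s)ᴴ * L s) * ep j).trace).re := by
          refine Finset.sum_congr rfl (fun s _ => ?_)
          have h := (Equiv.addRight s).tsum_eq (fun j => ((((L s)ᴴ * L s) * ep j).trace).re)
          exact h
      _ = ∑' j, ∑ s ∈ S, ((((L s)ᴴ * L s) * ep j).trace).re :=
          (Summable.tsum_finsetSum (fun s hs => hgS s hs)).symm
      _ = ∑' j, ((ep j).trace).re := by
          refine tsum_congr (fun j => ?_)
          rw [← Complex.re_sum, ← Matrix.trace_sum, ← Finset.sum_mul, hstoch, Matrix.one_mul]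
  have hle : ∀ i, ((ep i).trace).re ≤ (M i).trace.re := fun i => le_trans (hab i) (hbc i)
  have hdS : Summable (fun i => (M i).trace.re - ((ep i).trace).re) := hbS.sub htaS
  have hdsum0 : ∑' i, ((M i).trace.re - ((ep i).trace).re) = 0 := by
    rw [Summable.tsum_sub hbS htaS, htsum, sub_self]
  have heq : ∀ i, (M i).trace.re = ((ep i).trace).re := by
    intro i
    have h1 : (M i).trace.re - ((ep i).trace).re ≤ 0 :=
      hdsum0 ▸ Summable.le_tsum hdS i (fun j _ => sub_nonneg.mpr (hle j))
    linarith [hle i]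
  -- the corner of M outside the support of ep vanishes
  have hZ : ∀ i, (1 - P i) * M i * (1 - P i) = 0 := by
    intro i
    have hpsd : ((1 - P i) * M i * (1 - P i)).PosSemidef := by
      have := (hMPSD i).mul_mul_conjTranspose_same (1 - P i)
      rwa [(h1Pherm i).eq] at this
    refine psd_trace_re_eq_zero hpsd ?_
    have h3 : ((P i * M i * P i).trace).re = (M i).trace.re :=
      le_antisymm (hbc i) ((heq i) ▸ hab i)
    linarith [hPMPtr i]
  have hkill : ∀ i, ∀ s ∈ S, (1 - P i) * (L s * ep (i + s)) = 0 := by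
    intro i s hs
    have hterm : ∀ t ∈ S, ((1 - P i) * L t) * ep (i + t) * ((1 - P i) * L t)ᴴ
        = (1 - P i) * (L t * ep (i + t) * (L t)ᴴ) * (1 - P i) := by
      intro t _
      rw [Matrix.conjTranspose_mul, (h1Pherm i).eq]
      simp only [Matrix.mul_assoc]
    have hsum0 : ∑ t ∈ S, ((1 - P i) * L t) * ep (i + t) * ((1 - P i) * L t)ᴴ = 0 := by
      rw [Finset.sum_congr rfl hterm, ← Finset.sum_mul, ← Finset.mul_sum, ← hM i, hZ i]
    have h7 := psd_sum_eq_zero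
      (fun t _ => (hepPSD _).mul_mul_conjTranspose_same ((1 - P i) * L t)) hsum0 s hs
    have h4 := mul_psd_mul_conjTranspose_eq_zero (hepPSD (i+s)) h7
    rwa [Matrix.mul_assoc] at h4
  -- propagation of the support of the positive part along paths
  have hfixstep : ∀ (j s : V), s ∈ S → ∀ x : Fin k → ℂ, P j *ᵥ x = x →
      P (j - s) *ᵥ (L s *ᵥ x) = L s *ᵥ x := by
    intro j s hs x hx
    obtain ⟨u, hu⟩ : ∃ u, x = ep j *ᵥ u := by
      refine ⟨G j *ᵥ x, ?_⟩
      rw [Matrix.mulVec_mulVec, hepG j, hx]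
    have hker := hkill (j - s) s hs
    have hjs : j - s + s = j := by abel
    rw [hjs] at hker
    have h5 : L s * ep j = P (j - s) * (L s * ep j) := by
      have h6 : (1 : Matrix (Fin k) (Fin k) ℂ) * (L s * ep j)
          - P (j - s) * (L s * ep j) = 0 := by
        rw [← Matrix.sub_mul]; exact hker
      rw [Matrix.one_mul] at h6
      exact sub_eq_zero.mp h6
    have e1 : L s *ᵥ x = (L s * ep j) *ᵥ u := by rw [hu, Matrix.mulVec_mulVec]
    rw [e1, Matrix.mulVec_mulVec, ← h5]
  have hpath : ∀ (l : List V), (∀ s ∈ l, s ∈ S) → ∀ (j : V) (x : Fin k → ℂ),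
      P j *ᵥ x = x →
      P (j - l.sum) *ᵥ (((l.map L).prod) *ᵥ x) = ((l.map L).prod) *ᵥ x := by
    intro l
    induction l with
    | nil => intro _ j x hx; simpa using hx
    | cons s t ih =>
      intro hmem j x hx
      have hs : s ∈ S := hmem s List.mem_cons_self
      have ht : ∀ u ∈ t, u ∈ S := fun u hu => hmem u (List.mem_cons_of_mem s hu)
      have hQ := ih ht j x hx
      have hstep := hfixstep (j - t.sum) s hs _ hQ
      have harith : j - (s :: t).sum = j - t.sum - s := by
        rw [List.sum_cons, sub_sub, add_comm]
      rw [List.map_cons, List.prod_cons, harith, ← Matrix.mulVec_mulVec]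
      exact hstep
  -- total trace of the difference is zero
  have hdtr : Summable (fun i => ((ρ i).trace).re - ((σ i).trace).re) := hρs.sub hσs
  have hdtr0 : ∑' i, (((ρ i).trace).re - ((σ i).trace).re) = 0 := by
    rw [Summable.tsum_sub hρs hσs, htr, sub_self]
  by_cases hEP : ∀ i, ep i = 0
  · intro i
    have hd : ∀ j, ((ρ j).trace).re - ((σ j).trace).re = -(((em j).trace).re) := by
      intro j
      have h7 : ρ j - σ j = -(em j) := by rw [← hsub j, hEP j, zero_sub]
      calc ((ρ j).trace).re - ((σ j).trace).re = ((ρ j - σ j).trace).re := by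
            rw [Matrix.trace_sub, Complex.sub_re]
        _ = -(((em j).trace).re) := by rw [h7, Matrix.trace_neg, Complex.neg_re]
    have hnn : ∀ j', 0 ≤ ((em j').trace).re := fun j' => trace_re_nonneg (hemPSD j')
    have hS : Summable (fun j' => ((em j').trace).re) := by
      refine (hdtr.neg).congr (fun j' => ?_)
      rw [hd j', neg_neg]
    have h8 : ∑' j', ((em j').trace).re = 0 := by
      calc ∑' j', ((em j').trace).re
          = ∑' j', -((((ρ j').trace).re - ((σ j').trace).re)) :=
            tsum_congr (fun j' => by rw [hd j', neg_neg])
        _ = -∑' j', ((((ρ j').trace).re - ((σ j').trace).re)) := by rw [tsum_neg]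
        _ = 0 := by rw [hdtr0, neg_zero]
    have h9 := Summable.le_tsum hS i (fun j' _ => hnn j')
    have hem0 : ((em i).trace).re = 0 := le_antisymm (h8 ▸ h9) (hnn i)
    have h10 : ρ i - σ i = 0 := by
      rw [← hsub i, hEP i, psd_trace_re_eq_zero (hemPSD i) hem0, sub_self]
    exact sub_eq_zero.mp h10
  · push_neg at hEP
    obtain ⟨i₁, h1⟩ := hEP
    by_cases hEM : ∀ i, em i = 0
    · intro i
      have hd : ∀ j, ((ρ j).trace).re - ((σ j).trace).re = ((ep j).trace).re := by
        intro j
        have h7 : ρ j - σ j = ep j := by rw [← hsub j, hEM j, sub_zero]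
        calc ((ρ j).trace).re - ((σ j).trace).re = ((ρ j - σ j).trace).re := by
              rw [Matrix.trace_sub, Complex.sub_re]
          _ = ((ep j).trace).re := by rw [h7]
      have h8 : ∑' j', ((ep j').trace).re = 0 := by
        calc ∑' j', ((ep j').trace).re
            = ∑' j', ((((ρ j').trace).re - ((σ j').trace).re)) :=
              tsum_congr (fun j' => (hd j').symm)
          _ = 0 := hdtr0
      have h9 := Summable.le_tsum htaS i (fun j' _ => hta0 j')
      have hep0 : ((ep i).trace).re = 0 := le_antisymm (h8 ▸ h9) (hta0 i)
      have h10 : ρ i - σ i = 0 := by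
        rw [← hsub i, hEM i, psd_trace_re_eq_zero (hepPSD i) hep0, sub_self]
      exact sub_eq_zero.mp h10
    · exfalso
      push_neg at hEM
      obtain ⟨i₂, h2⟩ := hEM
      obtain ⟨u, hx⟩ := exists_mulVec_ne_zero h1
      obtain ⟨w, hy⟩ := exists_mulVec_ne_zero h2
      obtain ⟨l, hne, hlS, hlsum, hdot⟩ := hirr (i₁ - i₂) (ep i₁ *ᵥ u) (em i₂ *ᵥ w) hx hy
      have hfix1 : P i₁ *ᵥ (ep i₁ *ᵥ u) = ep i₁ *ᵥ u := by
        rw [Matrix.mulVec_mulVec, hPep i₁]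
      have hz := hpath l hlS i₁ (ep i₁ *ᵥ u) hfix1
      rw [hlsum] at hz
      have hii : i₁ - (i₁ - i₂) = i₂ := by abel
      rw [hii] at hz
      apply hdot
      calc star (em i₂ *ᵥ w) ⬝ᵥ (((l.map L).prod) *ᵥ (ep i₁ *ᵥ u))
          = star (em i₂ *ᵥ w) ⬝ᵥ (P i₂ *ᵥ (((l.map L).prod) *ᵥ (ep i₁ *ᵥ u))) := by
            rw [hz]
        _ = (star (em i₂ *ᵥ w) ᵥ* P i₂) ⬝ᵥ (((l.map L).prod) *ᵥ (ep i₁ *ᵥ u)) := by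
            rw [Matrix.dotProduct_mulVec]
        _ = star (P i₂ *ᵥ (em i₂ *ᵥ w)) ⬝ᵥ (((l.map L).prod) *ᵥ (ep i₁ *ᵥ u)) := by
            have hsm : star (P i₂ *ᵥ (em i₂ *ᵥ w)) = star (em i₂ *ᵥ w) ᵥ* (P i₂)ᴴ :=
              Matrix.star_mulVec _ _
            rw [hsm, (hPherm i₂).eq]
        _ = 0 := by
            have hPy : P i₂ *ᵥ (em i₂ *ᵥ w) = 0 := by
              rw [Matrix.mulVec_mulVec, hPem i₂, Matrix.zero_mulVec]
            rw [hPy, star_zero, zero_dotProduct]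
end OQRWAux

open OQRWAux in
/-- An irreducible translation-invariant open quantum random walk on an
infinite countable abelian group has no invariant state. Here `L s` is the
transition operator `L_{i,j} = L_{j-i}` for `s = j - i`, supported on the
finite set `S`; invariant states (which are necessarily block-diagonal) are
represented by their diagonal blocks `ρ i`. Irreducibility is expressed by the
path criterion: for any displacement `v` and nonzero vectors `x, y` there is a
path with steps in `S`, total displacement `v`, and `⟨y, L_π x⟩ ≠ 0`. -/
theorem stmt16 {V : Type*} [AddCommGroup V] [Countable V] [Infinite V]
    [DecidableEq V] {k : ℕ}
    (S : Finset V) (L : V → Matrix (Fin k) (Fin k) ℂ)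
    (hL0 : ∀ s ∉ S, L s = 0)
    (hstoch : ∑ s ∈ S, (L s)ᴴ * L s = 1)
    (hirr : ∀ v : V, ∀ x y : Fin k → ℂ, x ≠ 0 → y ≠ 0 →
      ∃ l : List V, l ≠ [] ∧ (∀ s ∈ l, s ∈ S) ∧ l.sum = v ∧
        star y ⬝ᵥ ((l.map L).prod).mulVec x ≠ 0) :
    ¬ ∃ ρ : V → Matrix (Fin k) (Fin k) ℂ,
        (∀ i, (ρ i).PosSemidef) ∧
        Summable (fun i => ((ρ i).trace).re) ∧
        (∑' i, ((ρ i).trace).re) = 1 ∧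
        (∀ i, (∑ s ∈ S, L s * ρ (i + s) * (L s)ᴴ) = ρ i) := by
  rintro ⟨ρ, hpsd, hsum, htot, hinv⟩
  have hshift : ∀ u i, ρ i = ρ (i + u) := by
    intro u
    refine key S L hstoch hirr ρ (fun i => ρ (i + u)) hpsd (fun i => hpsd _) hsum ?_ ?_ hinv ?_
    · have h := ((Equiv.addRight u).summable_iff
        (f := fun i => ((ρ i).trace).re)).mpr hsum
      exact h.congr (fun i => by simp [Equiv.coe_addRight, Function.comp])
    · exact ((Equiv.addRight u).tsum_eq (fun j => ((ρ j).trace).re)).symm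
    · intro i
      show ∑ s ∈ S, L s * ρ (i + s + u) * (L s)ᴴ = ρ (i + u)
      have h := hinv (i + u)
      rw [← h]
      refine Finset.sum_congr rfl (fun s _ => ?_)
      congr 2
      abel
  have hconst : ∀ i, ρ i = ρ 0 := fun i => by
    have h := hshift i 0
    rw [zero_add] at h
    exact h.symm
  have hconst' : ∀ i, ((ρ i).trace).re = ((ρ 0).trace).re := fun i => by rw [hconst i]
  have hzero : ((ρ 0).trace).re = 0 := by
    have htend := hsum.tendsto_cofinite_zero
    have h2 : Filter.Tendsto (fun _ : V => ((ρ 0).trace).re) Filter.cofinite (nhds 0) :=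
      htend.congr (fun i => hconst' i)
    exact (tendsto_nhds_unique h2 tendsto_const_nhds).symm
  have hzero' : ∀ i, ((ρ i).trace).re = 0 := fun i => by rw [hconst' i, hzero]
  have h10 : (1:ℝ) = 0 := by
    rw [← htot, tsum_congr hzero', tsum_zero]
  norm_num at h10
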